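/- There exist unit vectors a, a', b, b' : Fin 3 → ℝ such that the Bell parameter E(a,b) − E(a,b') + E(a',b') + E(a',b), where E(a,b) = ⟨ψ⁻, ((a·σ) ⊗ (b·σ)) ψ⁻⟩, has absolute value 2√2; in particular quantum mechanics violates the CHSH bound 2. -/

import Mathlib

open Matrix Kronecker

noncomputable section

/-- The Pauli matrix σ₁. -/
def pauli1 : Matrix (Fin 2) (Fin 2) ℂ := !![0, 1; 1, 0]

/-- The Pauli matrix σ₂. -/
def pauli2 : Matrix (Fin 2) (Fin 2) ℂ := !![0, -Complex.I; Complex.I, 0]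

/-- The Pauli matrix σ₃. -/
def pauli3 : Matrix (Fin 2) (Fin 2) ℂ := !![1, 0; 0, -1]

/-- `a·σ = Σᵢ aᵢ σᵢ` for a real direction vector `a`. -/
def dotPauli (a : Fin 3 → ℝ) : Matrix (Fin 2) (Fin 2) ℂ :=
  ((a 0 : ℝ) : ℂ) • pauli1 + ((a 1 : ℝ) : ℂ) • pauli2 + ((a 2 : ℝ) : ℂ) • pauli3

/-- The singlet state `ψ⁻ = (|↑↓⟩ − |↓↑⟩)/√2`. -/
def singlet : Fin 2 × Fin 2 → ℂ := fun s =>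
  if s = (0, 1) then ((1 / Real.sqrt 2 : ℝ) : ℂ)
  else if s = (1, 0) then ((-(1 / Real.sqrt 2) : ℝ) : ℂ) else 0

/-- The expectation value `⟨ψ, M ψ⟩ = Σ_{s,t} conj(ψ s) · M s t · ψ t`. -/
def expval (ψ : Fin 2 × Fin 2 → ℂ) (M : Matrix (Fin 2 × Fin 2) (Fin 2 × Fin 2) ℂ) : ℂ :=
  ∑ s, ∑ t, (starRingEnd ℂ) (ψ s) * M s t * ψ t

lemma expE (a b : Fin 3 → ℝ) : expval singlet ((dotPauli a) ⊗ₖ (dotPauli b)) =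
    -((a 0 * b 0 + a 1 * b 1 + a 2 * b 2 : ℝ) : ℂ) := by
  simp only [expval, singlet, dotPauli, pauli1, pauli2, pauli3, Fintype.sum_prod_type,
    Fin.sum_univ_two, kroneckerMap_apply, Matrix.add_apply, Matrix.smul_apply,
    Matrix.cons_val', Matrix.cons_val_zero, Matrix.cons_val_one, Matrix.head_cons,
    Matrix.empty_val', Matrix.cons_val_fin_one, Matrix.head_fin_const, smul_eq_mul,
    Prod.ext_iff, Prod.fst_zero, Prod.snd_zero, Prod.fst_one, Prod.snd_one,
    Fin.zero_eq_one_iff, Fin.one_eq_zero_iff]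
  norm_num [Complex.ext_iff, map_ofNat]
  have h : Real.sqrt 2 * Real.sqrt 2 = 2 := Real.mul_self_sqrt (by norm_num)
  constructor
  · linear_combination (-(a 2 * b 2 + a 1 * b 1 + a 0 * b 0)/2) * h
  · ring

/-- there exist unit vectors a, a', b, b' such that the Bell parameter for the
singlet state has absolute value 2√2, which exceeds the CHSH bound 2. -/
theorem stmt8 : ∃ a a' b b' : Fin 3 → ℝ,
    a 0 ^ 2 + a 1 ^ 2 + a 2 ^ 2 = 1 ∧
    a' 0 ^ 2 + a' 1 ^ 2 + a' 2 ^ 2 = 1 ∧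
    b 0 ^ 2 + b 1 ^ 2 + b 2 ^ 2 = 1 ∧
    b' 0 ^ 2 + b' 1 ^ 2 + b' 2 ^ 2 = 1 ∧
    ‖expval singlet ((dotPauli a) ⊗ₖ (dotPauli b)) -
        expval singlet ((dotPauli a) ⊗ₖ (dotPauli b')) +
        expval singlet ((dotPauli a') ⊗ₖ (dotPauli b')) +
        expval singlet ((dotPauli a') ⊗ₖ (dotPauli b))‖ = 2 * Real.sqrt 2 ∧
    2 < ‖expval singlet ((dotPauli a) ⊗ₖ (dotPauli b)) -
        expval singlet ((dotPauli a) ⊗ₖ (dotPauli b')) +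
        expval singlet ((dotPauli a') ⊗ₖ (dotPauli b')) +
        expval singlet ((dotPauli a') ⊗ₖ (dotPauli b))‖ := by
  have h : Real.sqrt 2 * Real.sqrt 2 = 2 := Real.mul_self_sqrt (by norm_num)
  have hpos : (0:ℝ) < Real.sqrt 2 := Real.sqrt_pos.2 (by norm_num)
  refine ⟨![1,0,0], ![0,0,1], ![-(Real.sqrt 2)⁻¹, 0, -(Real.sqrt 2)⁻¹],
    ![(Real.sqrt 2)⁻¹, 0, -(Real.sqrt 2)⁻¹], ?_, ?_, ?_, ?_, ?_, ?_⟩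
  · simp [Matrix.cons_val_two, Matrix.tail_cons]
  · simp [Matrix.cons_val_two, Matrix.tail_cons]
  · simp [Matrix.cons_val_two, Matrix.tail_cons]; field_simp; norm_num
  · simp [Matrix.cons_val_two, Matrix.tail_cons]; field_simp; norm_num
  · rw [expE, expE, expE, expE]
    have key : (-((1 * -(Real.sqrt 2)⁻¹ + 0 * 0 + 0 * -(Real.sqrt 2)⁻¹ : ℝ) : ℂ)) -
        (-((1 * (Real.sqrt 2)⁻¹ + 0 * 0 + 0 * -(Real.sqrt 2)⁻¹ : ℝ) : ℂ)) +
        (-((0 * (Real.sqrt 2)⁻¹ + 0 * 0 + 1 * -(Real.sqrt 2)⁻¹ : ℝ) : ℂ)) +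
        (-((0 * -(Real.sqrt 2)⁻¹ + 0 * 0 + 1 * -(Real.sqrt 2)⁻¹ : ℝ) : ℂ)) =
        ((2 * Real.sqrt 2 : ℝ) : ℂ) := by
      push_cast
      have : ((Real.sqrt 2 : ℝ) : ℂ) ≠ 0 := by exact_mod_cast hpos.ne'
      field_simp
      have hc : ((Real.sqrt 2:ℝ):ℂ) * ((Real.sqrt 2:ℝ):ℂ) = 2 := by exact_mod_cast h
      linear_combination -2 * hc
    simp only [Matrix.cons_val_zero, Matrix.cons_val_one, Matrix.head_cons,
      Matrix.cons_val_two, Matrix.tail_cons]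
    rw [key, Complex.norm_real, Real.norm_eq_abs, abs_of_pos (by positivity)]
  · rw [expE, expE, expE, expE]
    have key : (-((1 * -(Real.sqrt 2)⁻¹ + 0 * 0 + 0 * -(Real.sqrt 2)⁻¹ : ℝ) : ℂ)) -
        (-((1 * (Real.sqrt 2)⁻¹ + 0 * 0 + 0 * -(Real.sqrt 2)⁻¹ : ℝ) : ℂ)) +
        (-((0 * (Real.sqrt 2)⁻¹ + 0 * 0 + 1 * -(Real.sqrt 2)⁻¹ : ℝ) : ℂ)) +
        (-((0 * -(Real.sqrt 2)⁻¹ + 0 * 0 + 1 * -(Real.sqrt 2)⁻¹ : ℝ) : ℂ)) =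
        ((2 * Real.sqrt 2 : ℝ) : ℂ) := by
      push_cast
      have : ((Real.sqrt 2 : ℝ) : ℂ) ≠ 0 := by exact_mod_cast hpos.ne'
      field_simp
      have hc : ((Real.sqrt 2:ℝ):ℂ) * ((Real.sqrt 2:ℝ):ℂ) = 2 := by exact_mod_cast h
      linear_combination -2 * hc
    simp only [Matrix.cons_val_zero, Matrix.cons_val_one, Matrix.head_cons,
      Matrix.cons_val_two, Matrix.tail_cons]
    rw [key, Complex.norm_real, Real.norm_eq_abs, abs_of_pos (by positivity)]
    nlinarith [h, hpos]
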